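/- Let K be a nonempty compact Hausdorff space with no isolated points (a perfect compact Hausdorff space) and let X = C(K, ℝ) be the Banach space of continuous real-valued functions on K with the supremum norm. Then no point of the unit sphere S_{X*} is a point of continuity of the identity map I : (B_{X*}, w*) → (B_{X*}, w). -/

import Mathlib

open NormedSpace Filter Topology

noncomputable section

/-- `f` is a point of continuity of the identity map
`I : (B_{E*}, w*) → (B_{E*}, w)` between the closed unit ball of the dual of `E`
with the relative weak-* topology and the same set with the relative weak topology. -/
def IsPoC {E : Type*} [NormedAddCommGroup E] [NormedSpace ℝ E] (f : StrongDual ℝ E) : Prop :=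
  ContinuousWithinAt
    (fun g : WeakDual ℝ E => toWeakSpace ℝ (StrongDual ℝ E) (WeakDual.toStrongDual g))
    {g : WeakDual ℝ E | ‖WeakDual.toStrongDual g‖ ≤ 1}
    (StrongDual.toWeakDual f)

section Aux

open Set

variable {E : Type*} [NormedAddCommGroup E] [NormedSpace ℝ E]

/-- A net in the ball converging weak-* to `f` but kept away from `Φ f` by a fixed
functional `Φ` on the dual witnesses failure of `IsPoC`. -/
theorem not_isPoC_of_net (f : StrongDual ℝ E) {ι : Type*} (L : Filter ι) [L.NeBot]
    (g : ι → StrongDual ℝ E) (Φ : StrongDual ℝ (StrongDual ℝ E)) (c : ℝ) (hc : 0 < c)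
    (hball : ∀ i, ‖g i‖ ≤ 1)
    (hconv : ∀ h : E, Tendsto (fun i => g i h) L (𝓝 (f h)))
    (hsep : ∀ i, c ≤ |Φ (g i) - Φ f|) : ¬ IsPoC f := by
  intro hPoC
  have hG : Tendsto (fun i => StrongDual.toWeakDual (g i)) L
      (𝓝 (StrongDual.toWeakDual f)) := by
    rw [tendsto_iff_forall_eval_tendsto_topDualPairing]
    exact fun y => hconv y
  have h2 : Tendsto (fun i => StrongDual.toWeakDual (g i)) L
      (𝓝[{g : WeakDual ℝ E | ‖WeakDual.toStrongDual g‖ ≤ 1}]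
        (StrongDual.toWeakDual f)) := by
    rw [tendsto_nhdsWithin_iff]
    exact ⟨hG, Eventually.of_forall fun i => hball i⟩
  have h3 := Filter.Tendsto.comp hPoC h2
  have hΦc : Continuous fun x : WeakSpace ℝ (StrongDual ℝ E) =>
      (topDualPairing ℝ (StrongDual ℝ E)).flip x Φ := WeakBilin.eval_continuous _ Φ
  have h4 := (hΦc.tendsto _).comp h3
  have h5 : Tendsto (fun i => Φ (g i)) L (𝓝 (Φ f)) := h4
  have h6 := (Metric.tendsto_nhds.mp h5) c hc
  rcases (h6.and (Eventually.of_forall hsep)).exists with ⟨i, h7, h8⟩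
  rw [Real.dist_eq] at h7
  linarith

/-- An ultrafilter limit of evaluations against a bounded family gives an element of the
second dual respecting eventual membership in closed sets. -/
theorem exists_phi {ι : Type*} (L : Filter ι) [L.NeBot] (w : ι → E)
    (hw : ∀ i, ‖w i‖ ≤ 1) :
    ∃ Φ : StrongDual ℝ (StrongDual ℝ E), ∀ (ν : StrongDual ℝ E) (S : Set ℝ), IsClosed S →
      (∀ᶠ i in L, ν (w i) ∈ S) → Φ ν ∈ S := by
  obtain ⟨𝒰, h𝒰⟩ := Ultrafilter.exists_le L
  have key : ∀ ν : StrongDual ℝ E, ∃ x, Tendsto (fun i => ν (w i)) 𝒰 (𝓝 x) := by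
    intro ν
    have hmem : ∀ i, ν (w i) ∈ Icc (-‖ν‖) ‖ν‖ := by
      intro i
      have h1 : |ν (w i)| ≤ ‖ν‖ := by
        calc |ν (w i)| ≤ ‖ν‖ * ‖w i‖ := ν.le_opNorm _
        _ ≤ ‖ν‖ * 1 := by gcongr; exact hw i
        _ = ‖ν‖ := mul_one _
      exact abs_le.mp h1
    have hle : (𝒰.map fun i => ν (w i) : Filter ℝ) ≤ 𝓟 (Icc (-‖ν‖) ‖ν‖) := by
      rw [le_principal_iff]
      exact mem_map.mpr (Eventually.of_forall hmem)
    obtain ⟨x, -, hx⟩ := (isCompact_Icc (a := -‖ν‖) (b := ‖ν‖)).ultrafilter_le_nhds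
      (𝒰.map fun i => ν (w i)) hle
    exact ⟨x, hx⟩
  choose φ hφ using key
  have hadd : ∀ ν μ : StrongDual ℝ E, φ (ν + μ) = φ ν + φ μ := by
    intro ν μ
    refine tendsto_nhds_unique (hφ (ν + μ)) ?_
    have := (hφ ν).add (hφ μ)
    simpa using this
  have hsmul : ∀ (c : ℝ) (ν : StrongDual ℝ E), φ (c • ν) = c * φ ν := by
    intro c ν
    refine tendsto_nhds_unique (hφ (c • ν)) ?_
    have := (hφ ν).const_mul c
    simpa using this
  have hbound : ∀ ν : StrongDual ℝ E, ‖φ ν‖ ≤ 1 * ‖ν‖ := by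
    intro ν
    rw [one_mul, Real.norm_eq_abs]
    have habs : Tendsto (fun i => |ν (w i)|) 𝒰 (𝓝 |φ ν|) := (hφ ν).abs
    refine le_of_tendsto habs (Eventually.of_forall fun i => ?_)
    calc |ν (w i)| ≤ ‖ν‖ * ‖w i‖ := ν.le_opNorm _
    _ ≤ ‖ν‖ * 1 := by gcongr; exact hw i
    _ = ‖ν‖ := mul_one _
  refine ⟨LinearMap.mkContinuous
    { toFun := φ, map_add' := hadd, map_smul' := hsmul } 1 hbound, ?_⟩
  intro ν S hS hev
  exact hS.mem_of_tendsto (hφ ν) (hev.filter_mono h𝒰)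

end Aux

section NbhdIndex

open Set

/-- Open neighborhoods of `x₀`, directed by reverse inclusion. -/
def NbhdIndex (K : Type*) [TopologicalSpace K] (x₀ : K) : Type _ :=
  {U : Set K // IsOpen U ∧ x₀ ∈ U}

variable {K : Type*} [TopologicalSpace K] {x₀ : K}

instance : SemilatticeSup (NbhdIndex K x₀) where
  le U V := V.1 ⊆ U.1
  le_refl U := subset_rfl
  le_trans a b c h1 h2 := Set.Subset.trans (h2 : c.1 ⊆ b.1) (h1 : b.1 ⊆ a.1)
  le_antisymm a b h1 h2 := Subtype.ext (subset_antisymm (h2 : a.1 ⊆ b.1) (h1 : b.1 ⊆ a.1))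
  sup a b := ⟨a.1 ∩ b.1, a.2.1.inter b.2.1, a.2.2, b.2.2⟩
  le_sup_left a b := Set.inter_subset_left
  le_sup_right a b := Set.inter_subset_right
  sup_le a b c h1 h2 := Set.subset_inter (h1 : c.1 ⊆ a.1) (h2 : c.1 ⊆ b.1)

instance : Nonempty (NbhdIndex K x₀) := ⟨⟨Set.univ, isOpen_univ, Set.mem_univ _⟩⟩

lemma NbhdIndex.eventually_subset {O : Set K} (hO : IsOpen O) (hx : x₀ ∈ O) :
    ∀ᶠ U : NbhdIndex K x₀ in atTop, U.1 ⊆ O :=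
  eventually_atTop.mpr ⟨⟨O, hO, hx⟩, fun _ hb => hb⟩

end NbhdIndex

section CK

open Set

variable {K : Type*} [TopologicalSpace K] [CompactSpace K] [T2Space K]

lemma cnorm_le {v : C(K, ℝ)} {c : ℝ} (hc : 0 ≤ c) (h : ∀ x, |v x| ≤ c) : ‖v‖ ≤ c :=
  (ContinuousMap.norm_le _ hc).mpr h

lemma cabs_le (v : C(K, ℝ)) (x : K) : |v x| ≤ ‖v‖ := v.norm_coe_le_norm x

lemma prod_one_sub_bound (F : Finset K) (b : K → C(K, ℝ))
    (hb : ∀ y ∈ F, ∀ x, b y x ∈ Icc (0:ℝ) 1) (x : K) :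
    |(∏ y ∈ F, (1 - b y)) x| ≤ 1 := by
  rw [ContinuousMap.prod_apply]
  rw [Finset.abs_prod]
  refine Finset.prod_le_one (fun y _ => abs_nonneg _) (fun y hy => ?_)
  have h := hb y hy x
  simp only [ContinuousMap.sub_apply, ContinuousMap.one_apply]
  rw [abs_le]
  constructor <;> [linarith [h.2]; linarith [h.1]]

lemma tele (f : StrongDual ℝ C(K, ℝ)) (hf : ‖f‖ ≤ 1) (ε' : ℝ)
    (F : Finset K) (b : K → C(K, ℝ)) (U : K → Set K)
    (hb : ∀ y ∈ F, (∀ x, b y x ∈ Icc (0:ℝ) 1) ∧ (∀ x ∉ U y, b y x = 0) ∧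
      (∀ v : C(K,ℝ), ‖v‖ ≤ 1 → (∀ x ∉ U y, v x = 0) → |f v| < ε'))
    (w₀ : C(K, ℝ)) (hw₀ : ‖w₀‖ ≤ 1) :
    |f (w₀ * ∏ y ∈ F, (1 - b y)) - f w₀| ≤ F.card * ε' := by
  classical
  induction F using Finset.induction_on with
  | empty => simp
  | @insert a F ha IH =>
    have hbF : ∀ y ∈ F, (∀ x, b y x ∈ Icc (0:ℝ) 1) ∧ (∀ x ∉ U y, b y x = 0) ∧
        (∀ v : C(K,ℝ), ‖v‖ ≤ 1 → (∀ x ∉ U y, v x = 0) → |f v| < ε') :=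
      fun y hy => hb y (Finset.mem_insert_of_mem hy)
    have IH' := IH hbF
    set P : C(K, ℝ) := ∏ y ∈ F, (1 - b y) with hP
    have hsplit : w₀ * ∏ y ∈ insert a F, (1 - b y)
        = w₀ * P - w₀ * P * b a := by
      rw [Finset.prod_insert ha]; ring
    have hba := hb a (Finset.mem_insert_self a F)
    have hnv : ‖w₀ * P * b a‖ ≤ 1 := by
      refine cnorm_le zero_le_one (fun x => ?_)
      simp only [ContinuousMap.mul_apply]
      rw [abs_mul, abs_mul]
      have h1 : |w₀ x| ≤ 1 := (cabs_le w₀ x).trans hw₀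
      have h2 : |P x| ≤ 1 := prod_one_sub_bound F b (fun y hy => (hbF y hy).1) x
      have h3 : |b a x| ≤ 1 := abs_le.mpr ⟨by linarith [(hba.1 x).1], (hba.1 x).2⟩
      calc |w₀ x| * |P x| * |b a x| ≤ 1 * 1 * 1 := by
            refine mul_le_mul (mul_le_mul h1 h2 (abs_nonneg _) zero_le_one) h3
              (abs_nonneg _) (by norm_num)
      _ = 1 := by norm_num
    have hvanish : ∀ x ∉ U a, (w₀ * P * b a) x = 0 := by
      intro x hx
      rw [ContinuousMap.mul_apply, hba.2.1 x hx, mul_zero]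
    have hsmall : |f (w₀ * P * b a)| < ε' := hba.2.2 _ hnv hvanish
    have hfs : f (w₀ * ∏ y ∈ insert a F, (1 - b y))
        = f (w₀ * P) - f (w₀ * P * b a) := by rw [hsplit, map_sub]
    rw [hfs, Finset.card_insert_of_notMem ha]
    have : |f (w₀ * P) - f (w₀ * P * b a) - f w₀|
        ≤ |f (w₀ * P) - f w₀| + |f (w₀ * P * b a)| := by
      have := abs_sub (f (w₀ * P) - f w₀) (f (w₀ * P * b a))
      calc |f (w₀ * P) - f (w₀ * P * b a) - f w₀|
          = |(f (w₀ * P) - f w₀) - f (w₀ * P * b a)| := by ring_nf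
      _ ≤ |f (w₀ * P) - f w₀| + |f (w₀ * P * b a)| := abs_sub _ _
    have hε' : 0 ≤ ε' := le_of_lt (lt_of_le_of_lt (abs_nonneg _) hsmall)
    push_cast
    linarith [IH']

lemma exists_norming_vanishing (f : StrongDual ℝ C(K, ℝ)) (hf : ‖f‖ = 1)
    (hP : ∀ x : K, ∀ ε : ℝ, 0 < ε → ∃ U, IsOpen U ∧ x ∈ U ∧
      ∀ v : C(K,ℝ), ‖v‖ ≤ 1 → (∀ y ∉ U, v y = 0) → |f v| < ε)
    (F : Finset K) (ε : ℝ) (hε : 0 < ε) :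
    ∃ w : C(K,ℝ), ‖w‖ ≤ 1 ∧ (∀ y ∈ F, w y = 0) ∧ 1 - ε < f w := by
  classical
  -- norming element
  have h1 : (1 : ℝ) - ε/2 < ‖f‖ := by rw [hf]; linarith
  obtain ⟨x₀, hx₀n, hx₀⟩ := f.exists_lt_apply_of_lt_opNorm h1
  set w₀ : C(K, ℝ) := if 0 ≤ f x₀ then x₀ else -x₀ with hw₀def
  have hw₀n : ‖w₀‖ ≤ 1 := by
    rw [hw₀def]; split <;> simp [le_of_lt hx₀n, norm_neg]
  have hfw₀ : 1 - ε/2 < f w₀ := by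
    rw [hw₀def]
    rcases le_or_gt 0 (f x₀) with h | h
    · simpa [h, abs_of_nonneg h] using hx₀
    · rw [if_neg (not_le.mpr h), map_neg]
      have : ‖f x₀‖ = -(f x₀) := by rw [Real.norm_eq_abs, abs_of_neg h]
      linarith [hx₀.trans_eq this]
  -- small-variation neighborhoods
  set ε' : ℝ := ε / (2 * (F.card + 1)) with hε'def
  have hε' : 0 < ε' := by positivity
  have hUex := fun y => hP y ε' hε'
  choose U hUo hUx hUs using hUex
  -- bumps
  have hbex : ∀ y : K, ∃ b : C(K,ℝ), (∀ x, b x ∈ Icc (0:ℝ) 1) ∧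
      (∀ x ∉ U y, b x = 0) ∧ b y = 1 := by
    intro y
    have hdisj : Disjoint ((U y)ᶜ : Set K) {y} := by
      rw [Set.disjoint_left]
      rintro x hx rfl
      exact hx (hUx x)
    obtain ⟨b, hb0, hb1, hbI⟩ := exists_continuous_zero_one_of_isClosed
      (hUo y).isClosed_compl isClosed_singleton hdisj
    exact ⟨b, hbI, fun x hx => hb0 hx, hb1 rfl⟩
  choose b hbI hb0 hb1 using hbex
  refine ⟨w₀ * ∏ y ∈ F, (1 - b y), ?_, ?_, ?_⟩
  · refine cnorm_le zero_le_one (fun x => ?_)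
    simp only [ContinuousMap.mul_apply]
    rw [abs_mul]
    have h1' : |w₀ x| ≤ 1 := (cabs_le w₀ x).trans hw₀n
    have h2' : |(∏ y ∈ F, (1 - b y)) x| ≤ 1 :=
      prod_one_sub_bound F b (fun y _ => hbI y) x
    calc |w₀ x| * |(∏ y ∈ F, (1 - b y)) x| ≤ 1 * 1 :=
        mul_le_mul h1' h2' (abs_nonneg _) zero_le_one
    _ = 1 := by norm_num
  · intro y hy
    have hz : (∏ z ∈ F, (1 - b z)) y = 0 := by
      rw [ContinuousMap.prod_apply]
      refine Finset.prod_eq_zero hy ?_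
      simp [hb1 y]
    simp [ContinuousMap.mul_apply, hz]
  · have htele := tele f (le_of_eq hf) ε' F b U
      (fun y _ => ⟨hbI y, hb0 y, hUs y⟩) w₀ hw₀n
    have hcard : (F.card : ℝ) * ε' ≤ ε / 2 := by
      rw [hε'def, mul_div_assoc']
      rw [div_le_div_iff₀ (by positivity) two_pos]
      nlinarith [Nat.cast_nonneg (α := ℝ) F.card, hε.le]
    have h3 := (abs_le.mp htele).1
    linarith

lemma atomize (f : StrongDual ℝ C(K,ℝ)) (hf1 : ‖f‖ ≤ 1) (H : Finset C(K,ℝ)) (δ : ℝ)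
    (hδ : 0 < δ) :
    ∃ (T : Finset K) (g : StrongDual ℝ C(K,ℝ)), ‖g‖ ≤ 1 ∧ (∀ h ∈ H, |g h - f h| ≤ δ) ∧
      (∀ v : C(K,ℝ), (∀ y ∈ T, v y = 0) → g v = 0) := by
  classical
  set V : K → Set K := fun z => {x | ∀ h ∈ H, |h x - h z| < δ/2} with hVdef
  have hVo : ∀ z, IsOpen (V z) := by
    intro z
    have : V z = ⋂ h ∈ H, (fun x => |h x - h z|) ⁻¹' Iio (δ/2) := by
      ext x; simp [hVdef, mem_iInter]
    rw [this]
    refine isOpen_biInter_finset (fun h _ => ?_)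
    exact isOpen_Iio.preimage (continuous_abs.comp ((map_continuous h).sub continuous_const))
  have hVz : ∀ z, z ∈ V z := by intro z; simp [hVdef, hδ]
  have hcov : (Set.univ : Set K) ⊆ ⋃ z, V z :=
    fun x _ => Set.mem_iUnion.mpr ⟨x, hVz x⟩
  obtain ⟨T, hT⟩ := isCompact_univ.elim_finite_subcover V hVo hcov
  have hcov' : (Set.univ : Set K) ⊆ ⋃ i : ↥T, V i := by
    intro x hx
    obtain ⟨z, hzT, hxz⟩ := Set.mem_iUnion₂.mp (hT hx)
    exact Set.mem_iUnion.mpr ⟨⟨z, hzT⟩, hxz⟩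
  obtain ⟨ρ, hρ⟩ := PartitionOfUnity.exists_isSubordinate (s := (Set.univ : Set K))
    isClosed_univ (fun i : ↥T => V i) (fun i => hVo i) hcov'
  have sumρ : ∀ x : K, ∑ i : ↥T, ρ i x = 1 := by
    intro x
    have := ρ.sum_eq_one (Set.mem_univ x)
    rwa [finsum_eq_sum_of_fintype] at this
  set g : StrongDual ℝ C(K,ℝ) := ∑ i : ↥T, f (ρ i) • ContinuousMap.evalCLM ℝ (i : K) with hgdef
  have happly : ∀ v : C(K,ℝ), g v = f (∑ i : ↥T, v (i : K) • (ρ i : C(K,ℝ))) := by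
    intro v
    rw [map_sum]
    rw [hgdef, ContinuousLinearMap.sum_apply]
    refine Finset.sum_congr rfl (fun i _ => ?_)
    rw [ContinuousLinearMap.smul_apply, map_smul]
    simp [ContinuousMap.evalCLM, mul_comm]
  have hqbound : ∀ v : C(K,ℝ), ‖∑ i : ↥T, v (i : K) • (ρ i : C(K,ℝ))‖ ≤ ‖v‖ := by
    intro v
    refine cnorm_le (norm_nonneg v) (fun x => ?_)
    rw [ContinuousMap.sum_apply]
    calc |∑ i : ↥T, (v (i:K) • (ρ i : C(K,ℝ))) x|
        ≤ ∑ i : ↥T, |(v (i:K) • (ρ i : C(K,ℝ))) x| := Finset.abs_sum_le_sum_abs _ _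
    _ ≤ ∑ i : ↥T, ‖v‖ * ρ i x := by
        refine Finset.sum_le_sum (fun i _ => ?_)
        simp only [ContinuousMap.smul_apply, smul_eq_mul, abs_mul,
          abs_of_nonneg (ρ.nonneg i x)]
        exact mul_le_mul_of_nonneg_right (cabs_le v _) (ρ.nonneg i x)
    _ = ‖v‖ * ∑ i : ↥T, ρ i x := by rw [Finset.mul_sum]
    _ = ‖v‖ := by rw [sumρ, mul_one]
  refine ⟨T, g, ?_, ?_, ?_⟩
  · refine ContinuousLinearMap.opNorm_le_bound g zero_le_one (fun v => ?_)
    rw [one_mul, happly, Real.norm_eq_abs]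
    calc |f (∑ i : ↥T, v (i : K) • (ρ i : C(K,ℝ)))|
        ≤ ‖f‖ * ‖∑ i : ↥T, v (i : K) • (ρ i : C(K,ℝ))‖ := f.le_opNorm _
    _ ≤ 1 * ‖v‖ := mul_le_mul hf1 (hqbound v) (norm_nonneg _) zero_le_one
    _ = ‖v‖ := one_mul _
  · intro h hh
    have key : g h - f h = f ((∑ i : ↥T, h (i : K) • (ρ i : C(K,ℝ))) - h) := by
      rw [map_sub, happly]
    rw [key]
    have hnorm : ‖(∑ i : ↥T, h (i : K) • (ρ i : C(K,ℝ))) - h‖ ≤ δ/2 := by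
      refine cnorm_le (by linarith) (fun x => ?_)
      rw [ContinuousMap.sub_apply, ContinuousMap.sum_apply]
      have hx : (∑ i : ↥T, (h (i:K) • (ρ i : C(K,ℝ))) x) - h x
          = ∑ i : ↥T, (h (i:K) - h x) * ρ i x := by
        have e1 : (∑ i : ↥T, (h (i:K) • (ρ i : C(K,ℝ))) x)
            = ∑ i : ↥T, h (i:K) * ρ i x := by
          refine Finset.sum_congr rfl (fun i _ => ?_)
          simp [smul_eq_mul]
        rw [e1]
        have e2 : h x = ∑ i : ↥T, h x * ρ i x := by
          rw [← Finset.mul_sum, sumρ, mul_one]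
        calc (∑ i : ↥T, h (i:K) * ρ i x) - h x
            = (∑ i : ↥T, h (i:K) * ρ i x) - ∑ i : ↥T, h x * ρ i x := by rw [← e2]
        _ = ∑ i : ↥T, (h (i:K) * ρ i x - h x * ρ i x) := by rw [Finset.sum_sub_distrib]
        _ = ∑ i : ↥T, (h (i:K) - h x) * ρ i x := by
            refine Finset.sum_congr rfl (fun i _ => ?_); ring
      rw [hx]
      calc |∑ i : ↥T, (h (i:K) - h x) * ρ i x|
          ≤ ∑ i : ↥T, |(h (i:K) - h x) * ρ i x| := Finset.abs_sum_le_sum_abs _ _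
      _ ≤ ∑ i : ↥T, (δ/2) * ρ i x := by
          refine Finset.sum_le_sum (fun i _ => ?_)
          rw [abs_mul, abs_of_nonneg (ρ.nonneg i x)]
          by_cases hzero : ρ i x = 0
          · rw [hzero]; simp
          · have hsupp : x ∈ V (i : K) := hρ i (subset_closure hzero)
            have := hsupp h hh
            have hle : |h (i:K) - h x| ≤ δ/2 := by
              rw [abs_sub_comm]; exact le_of_lt this
            exact mul_le_mul_of_nonneg_right hle (ρ.nonneg i x)
      _ = (δ/2) * ∑ i : ↥T, ρ i x := by rw [Finset.mul_sum]
      _ = δ/2 := by rw [sumρ, mul_one]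
    calc |f ((∑ i : ↥T, h (i : K) • (ρ i : C(K,ℝ))) - h)|
        ≤ ‖f‖ * ‖(∑ i : ↥T, h (i : K) • (ρ i : C(K,ℝ))) - h‖ := f.le_opNorm _
    _ ≤ 1 * (δ/2) := mul_le_mul hf1 hnorm (norm_nonneg _) zero_le_one
    _ ≤ δ := by linarith
  · intro v hv
    rw [happly]
    have : ∀ i : ↥T, v (i : K) • (ρ i : C(K,ℝ)) = 0 := by
      intro i; rw [hv (i : K) i.2, zero_smul]
    rw [Finset.sum_congr rfl (fun i _ => this i), Finset.sum_const, smul_zero, map_zero]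

set_option maxHeartbeats 1000000 in
lemma case2_not_isPoC (f : StrongDual ℝ C(K,ℝ)) (hf : ‖f‖ = 1)
    (hP : ∀ x : K, ∀ ε : ℝ, 0 < ε → ∃ U, IsOpen U ∧ x ∈ U ∧
      ∀ v : C(K,ℝ), ‖v‖ ≤ 1 → (∀ y ∉ U, v y = 0) → |f v| < ε) : ¬ IsPoC f := by
  classical
  haveI : (atTop : Filter (Finset K × ℕ)).NeBot := atTop_neBot
  haveI : (atTop : Filter (Finset C(K,ℝ) × ℕ)).NeBot := atTop_neBot
  -- the norming family
  have hwex : ∀ p : Finset K × ℕ, ∃ w : C(K,ℝ), ‖w‖ ≤ 1 ∧ (∀ y ∈ p.1, w y = 0) ∧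
      1 - 1/(p.2+1) < f w :=
    fun p => exists_norming_vanishing f hf hP p.1 (1/(p.2+1)) (by positivity)
  choose w hw1 hw2 hw3 using hwex
  obtain ⟨Φ, hΦ⟩ := exists_phi (atTop : Filter (Finset K × ℕ)) w hw1
  have hΦf : 1 ≤ Φ f := by
    have hN : ∀ N : ℕ, Φ f ∈ Ici (1 - 1/(N+1) : ℝ) := by
      intro N
      refine hΦ f _ isClosed_Ici ?_
      refine eventually_atTop.mpr ⟨(∅, N), fun p hp => ?_⟩
      have hle : (1:ℝ)/(p.2+1) ≤ 1/(N+1) := by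
        have hp2 : N ≤ p.2 := hp.2
        have : (N:ℝ) + 1 ≤ (p.2:ℝ) + 1 := by
          have := (Nat.cast_le (α := ℝ)).mpr hp2
          linarith
        exact one_div_le_one_div_of_le (by positivity) this
      have := hw3 p
      simp only [mem_Ici]
      linarith
    by_contra hlt
    push_neg at hlt
    obtain ⟨N, hN'⟩ := exists_nat_one_div_lt (by linarith : (0:ℝ) < 1 - Φ f)
    have := hN N
    simp only [mem_Ici] at this
    push_cast at hN' this
    linarith
  -- the atomization net
  have hgex : ∀ q : Finset C(K,ℝ) × ℕ, ∃ (T : Finset K) (g : StrongDual ℝ C(K,ℝ)),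
      ‖g‖ ≤ 1 ∧ (∀ h ∈ q.1, |g h - f h| ≤ 1/(q.2+1)) ∧
      (∀ v : C(K,ℝ), (∀ y ∈ T, v y = 0) → g v = 0) :=
    fun q => atomize f hf.le q.1 (1/(q.2+1)) (by positivity)
  choose T g hg1 hg2 hg3 using hgex
  have hΦg : ∀ q, Φ (g q) = 0 := by
    intro q
    have : Φ (g q) ∈ ({0} : Set ℝ) := by
      refine hΦ (g q) _ isClosed_singleton ?_
      refine eventually_atTop.mpr ⟨(T q, 0), fun p hp => ?_⟩
      have hsub : T q ⊆ p.1 := hp.1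
      exact hg3 q (w p) (fun y hy => hw2 p y (hsub hy))
    simpa using this
  have hconv : ∀ h : C(K,ℝ), Tendsto (fun q => g q h) atTop (𝓝 (f h)) := by
    intro h
    rw [Metric.tendsto_nhds]
    intro ε hε
    obtain ⟨N, hN⟩ := exists_nat_one_div_lt hε
    refine eventually_atTop.mpr ⟨({h}, N), fun q hq => ?_⟩
    have h1 : |g q h - f h| ≤ 1/(q.2+1) := hg2 q h (hq.1 (Finset.mem_singleton_self h))
    have h2 : (1:ℝ)/(q.2+1) ≤ 1/(N+1) := by
      have hq2 : N ≤ q.2 := hq.2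
      refine one_div_le_one_div_of_le (by positivity) ?_
      have := (Nat.cast_le (α := ℝ)).mpr hq2
      linarith
    rw [Real.dist_eq]
    push_cast at h2 hN
    linarith
  have hsep : ∀ q, (1:ℝ) ≤ |Φ (g q) - Φ f| := by
    intro q
    rw [hΦg q, zero_sub, abs_neg]
    exact hΦf.trans (le_abs_self _)
  exact not_isPoC_of_net f atTop g Φ 1 one_pos hg1 hconv hsep

set_option maxHeartbeats 2000000 in
lemma case1_not_isPoC (f : StrongDual ℝ C(K,ℝ)) (hf : ‖f‖ = 1) (x₀ : K) (ε₀ : ℝ) (hε₀ : 0 < ε₀)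
    (hx : (𝓝[≠] x₀).NeBot)
    (hH : ∀ U : Set K, IsOpen U → x₀ ∈ U →
      ∃ v : C(K,ℝ), ‖v‖ ≤ 1 ∧ (∀ x ∉ U, v x = 0) ∧ ε₀ ≤ |f v|) : ¬ IsPoC f := by
  classical
  have hfle : ∀ v : C(K,ℝ), |f v| ≤ ‖v‖ := by
    intro v
    calc |f v| ≤ ‖f‖ * ‖v‖ := f.le_opNorm v
    _ = ‖v‖ := by rw [hf, one_mul]
  -- local variation suprema
  set A : Set K → Set ℝ := fun U =>
    (fun v : C(K,ℝ) => |f v|) '' {v | ‖v‖ ≤ 1 ∧ ∀ x ∉ U, v x = 0} with hAdef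
  have hA0 : ∀ U, (0:ℝ) ∈ A U := by
    intro U
    exact ⟨0, ⟨by simp, fun x _ => rfl⟩, by simp⟩
  have hAbdd : ∀ U, ∀ t ∈ A U, t ≤ 1 := by
    rintro U t ⟨v, ⟨hv1, -⟩, rfl⟩
    exact (hfle v).trans hv1
  set r : Set K → ℝ := fun U => sSup (A U) with hrdef
  have hAbddAbove : ∀ U, BddAbove (A U) := fun U => ⟨1, fun t ht => hAbdd U t ht⟩
  have hr_mem_le : ∀ (U : Set K) (v : C(K,ℝ)), ‖v‖ ≤ 1 → (∀ x ∉ U, v x = 0) →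
      |f v| ≤ r U := by
    intro U v h1 h2
    exact le_csSup (hAbddAbove U) ⟨v, ⟨h1, h2⟩, rfl⟩
  have hr_nonneg : ∀ U, 0 ≤ r U := fun U => le_csSup (hAbddAbove U) (hA0 U)
  set S : Set (Set K) := {U | IsOpen U ∧ x₀ ∈ U} with hSdef
  have hSuniv : Set.univ ∈ S := ⟨isOpen_univ, Set.mem_univ _⟩
  set a : ℝ := sInf (r '' S) with hadef
  have hSne : (r '' S).Nonempty := ⟨r Set.univ, Set.univ, hSuniv, rfl⟩
  have ha_le : ∀ U ∈ S, a ≤ r U := by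
    intro U hU
    exact csInf_le ⟨0, by rintro t ⟨W, -, rfl⟩; exact hr_nonneg W⟩ ⟨U, hU, rfl⟩
  have hε₀a : ε₀ ≤ a := by
    refine le_csInf hSne ?_
    rintro t ⟨U, hU, rfl⟩
    obtain ⟨v, hv1, hv2, hv3⟩ := hH U hU.1 hU.2
    exact hv3.trans (hr_mem_le U v hv1 hv2)
  have hex_v : ∀ U ∈ S, ∀ η : ℝ, 0 < η → ∃ v : C(K,ℝ), ‖v‖ ≤ 1 ∧
      (∀ x ∉ U, v x = 0) ∧ a - η < |f v| := by
    intro U hU η hη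
    have hlt : a - η < r U := lt_of_lt_of_le (by linarith) (ha_le U hU)
    obtain ⟨t, ⟨v, ⟨hv1, hv2⟩, rfl⟩, ht2⟩ := exists_lt_of_lt_csSup ⟨0, hA0 U⟩ hlt
    exact ⟨v, hv1, hv2, ht2⟩
  have hr_close : ∀ η : ℝ, 0 < η → ∃ U ∈ S, r U < a + η := by
    intro η hη
    obtain ⟨t, ⟨U, hUS, rfl⟩, ht⟩ := exists_lt_of_csInf_lt hSne
      (lt_add_of_pos_right a hη)
    exact ⟨U, hUS, ht⟩
  -- C1a : locally, functions vanishing near x₀ have small image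
  have C1a : ∀ η : ℝ, 0 < η → ∃ U₀ ∈ S, ∀ v : C(K,ℝ), ‖v‖ ≤ 1 →
      (∀ x ∉ U₀, v x = 0) → (∃ W, IsOpen W ∧ x₀ ∈ W ∧ ∀ x ∈ W, v x = 0) →
      |f v| ≤ η := by
    intro η hη
    obtain ⟨U₀, hU₀S, hU₀r⟩ := hr_close (η/2) (by positivity)
    refine ⟨U₀, hU₀S, ?_⟩
    rintro v hv1 hv2 ⟨W, hWo, hWx, hWv⟩
    have hWU : W ∩ U₀ ∈ S := ⟨hWo.inter hU₀S.1, hWx, hU₀S.2⟩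
    obtain ⟨v', hv'1, hv'2, hv'3⟩ := hex_v (W ∩ U₀) hWU (η/2) (by positivity)
    set s : ℝ := if 0 ≤ f v then 1 else -1 with hsdef
    set s' : ℝ := if 0 ≤ f v' then 1 else -1 with hs'def
    have habs_s : |s| = 1 := by rw [hsdef]; split <;> simp
    have habs_s' : |s'| = 1 := by rw [hs'def]; split <;> simp
    have hu : f (s • v + s' • v') = |f v| + |f v'| := by
      rw [map_add, map_smul, map_smul, smul_eq_mul, smul_eq_mul, hsdef, hs'def]
      rcases le_or_gt 0 (f v) with h | h <;> rcases le_or_gt 0 (f v') with h' | h' <;>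
        simp [abs_of_nonneg, abs_of_neg, h, h', not_le.mpr] <;> ring_nf <;>
        first
          | rw [abs_of_nonneg h, abs_of_nonneg h']
          | rw [abs_of_nonneg h, abs_of_neg h']
          | rw [abs_of_neg h, abs_of_nonneg h']
          | rw [abs_of_neg h, abs_of_neg h']
      all_goals ring
    have hnorm : ‖s • v + s' • v'‖ ≤ 1 := by
      refine cnorm_le zero_le_one (fun x => ?_)
      simp only [ContinuousMap.add_apply, ContinuousMap.smul_apply, smul_eq_mul]
      by_cases hxW : x ∈ W
      · rw [hWv x hxW, mul_zero, zero_add, abs_mul, habs_s', one_mul]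
        exact (cabs_le v' x).trans hv'1
      · have : v' x = 0 := hv'2 x (fun hmem => hxW hmem.1)
        rw [this, mul_zero, add_zero, abs_mul, habs_s, one_mul]
        exact (cabs_le v x).trans hv1
    have hvanish : ∀ x ∉ U₀, (s • v + s' • v') x = 0 := by
      intro x hxU
      have h1 : v x = 0 := hv2 x hxU
      have h2 : v' x = 0 := hv'2 x (fun hmem => hxU hmem.2)
      simp [h1, h2]
    have hle := hr_mem_le U₀ _ hnorm hvanish
    rw [hu] at hle
    have habs : |(|f v| + |f v'|)| = |f v| + |f v'| :=
      abs_of_nonneg (by positivity)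
    rw [habs] at hle
    have h4 : a - η/2 < |f v'| := hv'3
    linarith
  -- C1b : bumps at x₀ have |f e| bounded below
  have C1b : ∃ U₁ ∈ S, ∀ e : C(K,ℝ), (∀ x, e x ∈ Set.Icc (0:ℝ) 1) →
      (∀ x ∉ U₁, e x = 0) → (∃ V, IsOpen V ∧ x₀ ∈ V ∧ ∀ x ∈ V, e x = 1) →
      ε₀/2 ≤ |f e| := by
    set η : ℝ := ε₀/8 with hηdef
    have hη : 0 < η := by positivity
    obtain ⟨U₀, hU₀S, hC1a⟩ := C1a η hη
    refine ⟨U₀, hU₀S, ?_⟩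
    rintro e heI he0 ⟨V, hVo, hVx, hV1⟩
    obtain ⟨v, hv1, hv2, hv3⟩ := hex_v (V ∩ U₀) ⟨hVo.inter hU₀S.1, hVx, hU₀S.2⟩ η hη
    set wv : C(K,ℝ) := v - v x₀ • e with hwvdef
    have hwvapp : ∀ x, wv x = v x - v x₀ * e x := by
      intro x; simp [hwvdef]
    have hw0 : wv x₀ = 0 := by rw [hwvapp, hV1 x₀ hVx, mul_one, sub_self]
    set G : Set K := {x | |wv x| < η} with hGdef
    have hGo : IsOpen G := by
      have : G = (fun x => |wv x|) ⁻¹' Set.Iio η := rfl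
      rw [this]
      exact isOpen_Iio.preimage (continuous_abs.comp wv.continuous)
    have hGx : x₀ ∈ G := by simp [hGdef, hw0, hη]
    obtain ⟨V₂, hV₂o, hV₂x, hV₂c⟩ := normal_exists_closure_subset
      (isClosed_singleton (x := x₀)) hGo (Set.singleton_subset_iff.mpr hGx)
    have hdisj : Disjoint (Gᶜ : Set K) (closure V₂) := by
      rw [Set.disjoint_left]
      intro z hz hz2
      exact hz (hV₂c hz2)
    obtain ⟨e'', he''0, he''1, he''I⟩ := exists_continuous_zero_one_of_isClosed
      hGo.isClosed_compl isClosed_closure hdisj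
    set w' : C(K,ℝ) := wv * (1 - e'') with hw'def
    have hwnorm : ∀ x, |wv x| ≤ 2 := by
      intro x
      rw [hwvapp]
      have h1 : |v x| ≤ 1 := (cabs_le v x).trans hv1
      have h2 : |v x₀| ≤ 1 := (cabs_le v x₀).trans hv1
      have h3 : |e x| ≤ 1 := abs_le.mpr ⟨by linarith [(heI x).1], (heI x).2⟩
      calc |v x - v x₀ * e x| ≤ |v x| + |v x₀ * e x| := abs_sub _ _
      _ ≤ 1 + 1 * 1 := by
          refine add_le_add h1 ?_
          rw [abs_mul]
          exact mul_le_mul h2 h3 (abs_nonneg _) zero_le_one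
      _ = 2 := by norm_num
    have hsmallw' : |f w'| ≤ 2*η := by
      have happ := hC1a ((2:ℝ)⁻¹ • w') ?_ ?_ ?_
      · rw [map_smul, smul_eq_mul, abs_mul] at happ
        have : |(2:ℝ)⁻¹| = 2⁻¹ := by norm_num
        rw [this] at happ
        linarith
      · refine cnorm_le zero_le_one (fun x => ?_)
        simp only [ContinuousMap.smul_apply, smul_eq_mul, hw'def,
          ContinuousMap.mul_apply, ContinuousMap.sub_apply, ContinuousMap.one_apply]
        rw [abs_mul, abs_mul]
        have h1 : |wv x| ≤ 2 := hwnorm x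
        have h2 : |1 - e'' x| ≤ 1 := by
          have := he''I x
          rw [abs_le]; constructor <;> [linarith [this.2]; linarith [this.1]]
        have : |(2:ℝ)⁻¹| = 2⁻¹ := by norm_num
        rw [this]
        nlinarith [abs_nonneg (wv x), abs_nonneg (1 - e'' x)]
      · intro z hz
        have h1 : v z = 0 := hv2 z (fun hmem => hz hmem.2)
        have h2 : e z = 0 := he0 z hz
        simp [hw'def, hwvapp, h1, h2]
      · refine ⟨V₂, hV₂o, hV₂x rfl, fun z hz => ?_⟩
        have : e'' z = 1 := he''1 (subset_closure hz)
        simp [hw'def, this]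
    have hsmalltail : |f (wv * e'')| ≤ η := by
      refine (hfle _).trans (cnorm_le hη.le (fun z => ?_))
      simp only [ContinuousMap.mul_apply]
      rw [abs_mul]
      by_cases hzG : z ∈ G
      · have h1 : |wv z| ≤ η := le_of_lt hzG
        have h2 : |e'' z| ≤ 1 := by
          have := he''I z
          rw [abs_le]; constructor <;> [linarith [this.1]; linarith [this.2]]
        nlinarith [abs_nonneg (wv z), abs_nonneg (e'' z)]
      · have : e'' z = 0 := he''0 hzG
        rw [this]; simp [hη.le]
    have hsplit : f wv = f w' + f (wv * e'') := by
      rw [← map_add]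
      congr 1
      rw [hw'def]
      ring
    have hfwv : |f wv| ≤ 3*η := by
      rw [hsplit]
      calc |f w' + f (wv * e'')| ≤ |f w'| + |f (wv * e'')| := abs_add_le _ _
      _ ≤ 2*η + η := add_le_add hsmallw' hsmalltail
      _ = 3*η := by ring
    have hvsplit : f v = f wv + v x₀ * f e := by
      have h0 : f v = f (wv + v x₀ • e) := by
        congr 1
        rw [hwvdef]; ring
      rw [h0, map_add, map_smul, smul_eq_mul]
    have hlower : ε₀/2 ≤ |v x₀ * f e| := by
      have h1 : |f v| ≤ |f wv| + |v x₀ * f e| := by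
        rw [hvsplit]; exact abs_add_le _ _
      have h4 : η = ε₀/8 := hηdef
      linarith [hε₀a, hv3, hfwv]
    have h2 : |v x₀| ≤ 1 := (cabs_le v x₀).trans hv1
    rw [abs_mul] at hlower
    nlinarith [abs_nonneg (f e)]
  -- bump net for Φ
  haveI : (atTop : Filter (NbhdIndex K x₀)).NeBot := atTop_neBot
  have hbex : ∀ U : NbhdIndex K x₀, ∃ (e : C(K,ℝ)) (V : Set K), IsOpen V ∧ x₀ ∈ V ∧
      (∀ x, e x ∈ Set.Icc (0:ℝ) 1) ∧ (∀ x ∉ U.1, e x = 0) ∧ (∀ x ∈ V, e x = 1) := by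
    intro U
    obtain ⟨V, hVo, hVx, hVc⟩ := normal_exists_closure_subset
      (isClosed_singleton (x := x₀)) U.2.1 (Set.singleton_subset_iff.mpr U.2.2)
    have hdisj : Disjoint (U.1ᶜ : Set K) (closure V) := by
      rw [Set.disjoint_left]
      intro z hz hz2
      exact hz (hVc hz2)
    obtain ⟨e, he0, he1, heI⟩ := exists_continuous_zero_one_of_isClosed
      U.2.1.isClosed_compl isClosed_closure hdisj
    exact ⟨e, V, hVo, hVx rfl, heI, fun z hz => he0 hz,
      fun z hz => he1 (subset_closure hz)⟩
  choose eb Vb hVbo hVbx hebI heb0 heb1 using hbex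
  have hebn : ∀ U, ‖eb U‖ ≤ 1 := by
    intro U
    refine cnorm_le zero_le_one (fun z => ?_)
    exact abs_le.mpr ⟨by linarith [(hebI U z).1], (hebI U z).2⟩
  obtain ⟨Φ, hΦ⟩ := exists_phi (atTop : Filter (NbhdIndex K x₀)) eb hebn
  have hΦf : ε₀/2 ≤ |Φ f| := by
    obtain ⟨U₁, hU₁S, hC1b⟩ := C1b
    have hcl : IsClosed {t : ℝ | ε₀/2 ≤ |t|} := by
      have : {t : ℝ | ε₀/2 ≤ |t|} = abs ⁻¹' Set.Ici (ε₀/2) := rfl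
      rw [this]
      exact isClosed_Ici.preimage continuous_abs
    have := hΦ f _ hcl ?_
    · exact this
    · refine (NbhdIndex.eventually_subset hU₁S.1 hU₁S.2).mono (fun U hU => ?_)
      exact hC1b (eb U) (hebI U) (fun z hz => heb0 U z (fun h => hz (hU h)))
        ⟨Vb U, hVbo U, hVbx U, heb1 U⟩
  -- the points y_U ≠ x₀
  have hyex : ∀ U : NbhdIndex K x₀, ∃ y, y ∈ U.1 ∧ y ≠ x₀ := by
    intro U
    haveI := hx
    have h1 : U.1 ∈ 𝓝[≠] x₀ := mem_nhdsWithin_of_mem_nhds (U.2.1.mem_nhds U.2.2)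
    have h2 : ({x₀}ᶜ : Set K) ∈ 𝓝[≠] x₀ := self_mem_nhdsWithin
    obtain ⟨y, hy1, hy2⟩ := Filter.nonempty_of_mem (Filter.inter_mem h1 h2)
    exact ⟨y, hy1, hy2⟩
  choose y hyU hyne using hyex
  -- the net of shifted functionals
  have hkey : ∀ (U : NbhdIndex K x₀) (h : C(K,ℝ)),
      f ((1 - eb U) * h) + f (eb U) * h (y U)
        = f ((1 - eb U) * h + h (y U) • eb U) := by
    intro U h
    rw [map_add, map_smul, smul_eq_mul]
    ring
  have hbnd : ∀ (U : NbhdIndex K x₀) (h : C(K,ℝ)),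
      ‖f ((1 - eb U) * h) + f (eb U) * h (y U)‖ ≤ 1 * ‖h‖ := by
    intro U h
    rw [one_mul, Real.norm_eq_abs, hkey]
    refine (hfle _).trans (cnorm_le (norm_nonneg h) (fun z => ?_))
    simp only [ContinuousMap.add_apply, ContinuousMap.mul_apply,
      ContinuousMap.sub_apply, ContinuousMap.one_apply, ContinuousMap.smul_apply,
      smul_eq_mul]
    have hI := hebI U z
    have h1 : |h z| ≤ ‖h‖ := cabs_le h z
    have h2 : |h (y U)| ≤ ‖h‖ := cabs_le h (y U)
    calc |(1 - eb U z) * h z + h (y U) * eb U z|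
        ≤ |(1 - eb U z) * h z| + |h (y U) * eb U z| := abs_add_le _ _
    _ = (1 - eb U z) * |h z| + |h (y U)| * eb U z := by
        rw [abs_mul, abs_mul, abs_of_nonneg (by linarith [hI.2] : (0:ℝ) ≤ 1 - eb U z),
          abs_of_nonneg hI.1]
    _ ≤ (1 - eb U z) * ‖h‖ + ‖h‖ * eb U z := by
        refine add_le_add ?_ ?_
        · exact mul_le_mul_of_nonneg_left h1 (by linarith [hI.2])
        · exact mul_le_mul_of_nonneg_right h2 hI.1
    _ = ‖h‖ := by ring
  set gl : NbhdIndex K x₀ → StrongDual ℝ C(K,ℝ) := fun U => LinearMap.mkContinuous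
    { toFun := fun h => f ((1 - eb U) * h) + f (eb U) * h (y U),
      map_add' := by
        intro h h'
        simp only [mul_add, map_add, ContinuousMap.add_apply]
        ring,
      map_smul' := by
        intro c h
        simp only [RingHom.id_apply, smul_eq_mul]
        rw [mul_smul_comm, map_smul, smul_eq_mul, ContinuousMap.smul_apply, smul_eq_mul]
        ring }
    1 (hbnd U) with hgldef
  have hglapp : ∀ (U : NbhdIndex K x₀) (h : C(K,ℝ)),
      gl U h = f ((1 - eb U) * h) + f (eb U) * h (y U) := fun U h => rfl
  have hgball : ∀ U, ‖gl U‖ ≤ 1 := by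
    intro U
    exact LinearMap.mkContinuous_norm_le _ zero_le_one _
  have hconv : ∀ h : C(K,ℝ), Tendsto (fun U => gl U h) atTop (𝓝 (f h)) := by
    intro h
    rw [Metric.tendsto_nhds]
    intro ε hε
    set O : Set K := {z | |h z - h x₀| < ε/4} with hOdef
    have hOo : IsOpen O := by
      have : O = (fun z => |h z - h x₀|) ⁻¹' Set.Iio (ε/4) := rfl
      rw [this]
      exact isOpen_Iio.preimage (continuous_abs.comp ((map_continuous h).sub continuous_const))
    have hOx : x₀ ∈ O := by simp [hOdef]; positivity
    refine (NbhdIndex.eventually_subset hOo hOx).mono (fun U hUO => ?_)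
    rw [Real.dist_eq, hglapp, hkey]
    have hdiff : f ((1 - eb U) * h + h (y U) • eb U) - f h
        = f ((1 - eb U) * h + h (y U) • eb U - h) := by rw [map_sub]
    rw [hdiff]
    have hub : |f ((1 - eb U) * h + h (y U) • eb U - h)| ≤ ε/2 := by
      refine (hfle _).trans (cnorm_le (by positivity) (fun z => ?_))
      simp only [ContinuousMap.sub_apply, ContinuousMap.add_apply,
        ContinuousMap.mul_apply, ContinuousMap.one_apply, ContinuousMap.smul_apply,
        smul_eq_mul]
      have heq : (1 - eb U z) * h z + h (y U) * eb U z - h z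
          = eb U z * (h (y U) - h z) := by ring
      rw [heq]
      by_cases hez : eb U z = 0
      · rw [hez, zero_mul]; simp; positivity
      · have hzU : z ∈ U.1 := by
          by_contra hzU
          exact hez (heb0 U z hzU)
        have hzO : z ∈ O := hUO hzU
        have hyO : y U ∈ O := hUO (hyU U)
        have hI := hebI U z
        rw [abs_mul, abs_of_nonneg hI.1]
        have h3 : |h (y U) - h z| ≤ ε/2 := by
          have := hzO
          have := hyO
          simp only [hOdef, Set.mem_setOf_eq] at *
          calc |h (y U) - h z| ≤ |h (y U) - h x₀| + |h x₀ - h z| := abs_sub_le _ _ _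
          _ ≤ ε/4 + ε/4 := by
              refine add_le_add (le_of_lt hyO) ?_
              rw [abs_sub_comm]
              exact le_of_lt hzO
          _ = ε/2 := by ring
        calc eb U z * |h (y U) - h z| ≤ 1 * (ε/2) :=
            mul_le_mul hI.2 h3 (abs_nonneg _) zero_le_one
        _ = ε/2 := one_mul _
    linarith
  have hΦg : ∀ U, Φ (gl U) = 0 := by
    intro U
    have hmem : Φ (gl U) ∈ ({0} : Set ℝ) := by
      refine hΦ (gl U) _ isClosed_singleton ?_
      have hOo : IsOpen (Vb U ∩ {y U}ᶜ) :=
        (hVbo U).inter isOpen_compl_singleton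
      have hOx : x₀ ∈ Vb U ∩ {y U}ᶜ :=
        ⟨hVbx U, fun hc => (hyne U) (by simpa using hc.symm)⟩
      refine (NbhdIndex.eventually_subset hOo hOx).mono (fun W hW => ?_)
      rw [hglapp]
      have h2 : eb W (y U) = 0 := by
        refine heb0 W (y U) (fun hyW => ?_)
        exact (hW hyW).2 rfl
      have h1 : (1 - eb U) * eb W = 0 := by
        ext z
        simp only [ContinuousMap.mul_apply, ContinuousMap.sub_apply,
          ContinuousMap.one_apply, ContinuousMap.zero_apply]
        by_cases hz : eb W z = 0
        · rw [hz, mul_zero]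
        · have hzW : z ∈ W.1 := by
            by_contra hzW
            exact hz (heb0 W z hzW)
          have : eb U z = 1 := heb1 U z (hW hzW).1
          rw [this]; ring
      rw [h1, h2, map_zero, mul_zero, add_zero]
      rfl
    simpa using hmem
  have hsep : ∀ U, ε₀/2 ≤ |Φ (gl U) - Φ f| := by
    intro U
    rw [hΦg U, zero_sub, abs_neg]
    exact hΦf
  exact not_isPoC_of_net f atTop gl Φ (ε₀/2) (by positivity) hgball hconv hsep

end CK

/-- Let `K` be a nonempty perfect compact Hausdorff space (no isolated
points) and `X = C(K, ℝ)`.  Then no point of the unit sphere `S_{X*}` is a point of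
continuity of `I : (B_{X*}, w*) → (B_{X*}, w)`. -/
theorem stmt_13 {K : Type*} [TopologicalSpace K] [CompactSpace K] [T2Space K] [Nonempty K]
    (hK : ∀ x : K, (𝓝[≠] x).NeBot) :
    ∀ f : StrongDual ℝ C(K, ℝ), ‖f‖ = 1 → ¬ IsPoC f := by
  intro f hf
  by_cases hP : ∀ x : K, ∀ ε : ℝ, 0 < ε → ∃ U, IsOpen U ∧ x ∈ U ∧
      ∀ v : C(K,ℝ), ‖v‖ ≤ 1 → (∀ y ∉ U, v y = 0) → |f v| < ε
  · exact case2_not_isPoC f hf hP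
  · push_neg at hP
    obtain ⟨x₀, ε₀, hε₀, hH⟩ := hP
    refine case1_not_isPoC f hf x₀ ε₀ hε₀ (hK x₀) (fun U hUo hUx => ?_)
    obtain ⟨v, hv⟩ := hH U hUo hUx
    exact ⟨v, hv.1, hv.2.1, hv.2.2⟩
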